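/- arXiv:2503.12571 — 2 statements merged into one kernel-verified Lean document; each statement's English description precedes it below -/
import Mathlib

section
/- Let α ≥ 2 be a countable ordinal and let X = ω^α + 1 with the order topology. For A ⊆ X, A belongs to conv_α (i.e., A^d is finite) if and only if for every strictly increasing sequence (λ_n) in ω^α, the set A ∩ [λ_n, λ_{n+1}] is finite for all but finitely many n. -/
open Set Filter Topology Ordinal

noncomputable section

/-- The derived set of `A`: the set of accumulation (limit) points of `A`. -/
def derivSet {X : Type*} [TopologicalSpace X] (A : Set X) : Set X :=
  {p | p ∈ closure (A \ {p})}

/-- The ordinal space `ω^a + 1 = [0, ω^a]` with the (order) topology. -/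
abbrev OrdSpace (a : Ordinal) : Type _ := ↥(Set.Iic (omega0 ^ a))

/-- The ideal `conv_a` on `ω^a + 1`: sets with finite derived set. -/
def convIdeal (a : Ordinal) : Set (Set (OrdSpace a)) :=
  {A | (derivSet A).Finite}

/-- `I` is an ideal of subsets. -/
structure IsIdeal {S : Type*} (I : Set (Set S)) : Prop where
  empty_mem : ∅ ∈ I
  subset_mem : ∀ {A B : Set S}, A ⊆ B → B ∈ I → A ∈ I
  union_mem : ∀ {A B : Set S}, A ∈ I → B ∈ I → A ∪ B ∈ I

/-- The subsequence of `f` indexed by `A` converges to `x`. -/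
def ConvAlong {X : Type*} [TopologicalSpace X] (f : ℕ → X) (A : Set ℕ) (x : X) : Prop :=
  ∀ U ∈ nhds x, {n ∈ A | f n ∉ U}.Finite

/-- Katětov order: `J ≤_K I`, where `I` lives on `X` and `J` on `Y`. -/
def KatetovLE {X Y : Type*} (J : Set (Set Y)) (I : Set (Set X)) : Prop :=
  ∃ f : X → Y, ∀ A ∈ J, f ⁻¹' A ∈ I

/-- `X ∈ FinBW(I)`: every sequence in `X` has a convergent subsequence indexed
by an `I`-positive set. -/
def InFinBW (I : Set (Set ℕ)) (X : Type*) [TopologicalSpace X] : Prop :=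
  ∀ f : ℕ → X, ∃ A : Set ℕ, A ∉ I ∧ ∃ x : X, ConvAlong f A x

/- ### Auxiliary lemmas -/

lemma derivSet_mono' {X : Type*} [TopologicalSpace X] {A B : Set X} (h : A ⊆ B) :
    derivSet A ⊆ derivSet B := fun p hp =>
  closure_mono (Set.diff_subset_diff_left h) hp

lemma exists_mem_derivSet_of_infinite' {X : Type*} [TopologicalSpace X] [CompactSpace X]
    {S : Set X} (hS : S.Infinite) : ∃ p ∈ closure S, p ∈ derivSet S := by
  classical
  let f := hS.natEmbedding
  let g : ℕ → X := fun n => (f n : X)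
  have hg : Function.Injective g := Subtype.val_injective.comp f.injective
  have hgS : ∀ n, g n ∈ S := fun n => (f n).2
  obtain ⟨x, hx⟩ := exists_clusterPt_of_compactSpace (map g atTop)
  have hmem : ∀ U ∈ 𝓝 x, (U ∩ (S \ {x})).Nonempty := by
    intro U hU
    have hfr : ∃ᶠ n in atTop, g n ∈ U := by
      have : MapClusterPt x atTop g := hx
      exact (mapClusterPt_iff_frequently.mp this) U hU
    have hinf : {n | g n ∈ U}.Infinite := Nat.frequently_atTop_iff_infinite.mp hfr
    have hfin : (g ⁻¹' {x}).Finite := Set.Subsingleton.finite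
      (fun y hy z hz => hg (by simp only [Set.mem_preimage, Set.mem_singleton_iff] at hy hz; rw [hy, hz]))
    obtain ⟨n, hn1, hn2⟩ := (hinf.diff hfin).nonempty
    exact ⟨g n, hn1, hgS n, fun h => hn2 (by simpa using h)⟩
  have hxd : x ∈ derivSet S := by
    rw [derivSet, Set.mem_setOf_eq, mem_closure_iff]
    intro o ho hxo
    exact hmem o (ho.mem_nhds hxo)
  exact ⟨x, closure_mono Set.diff_subset hxd, hxd⟩

lemma ioc_preimage_open {a : Ordinal} (q p : Ordinal) :
    IsOpen ((Subtype.val ⁻¹' (Set.Ioc q p)) : Set (OrdSpace a)) := by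
  have : IsOpen (Set.Ioc q p) := by
    rw [← Order.Ioo_succ_right]; exact isOpen_Ioo
  exact this.preimage continuous_subtype_val

/-- If `p` is an accumulation point of `A` and `q < p`, infinitely many points of `A`
lie strictly between `q` and `p`. -/
lemma left_points {a : Ordinal} {A : Set (OrdSpace a)} {p : OrdSpace a}
    (hp : p ∈ derivSet A) {q : Ordinal} (hq : q < (p : Ordinal)) :
    {x | x ∈ A ∧ q < (x : Ordinal) ∧ (x : Ordinal) < (p : Ordinal)}.Infinite := by
  have step : ∀ r, q ≤ r → r < (p : Ordinal) →
      ∃ x, x ∈ A ∧ r < (x : Ordinal) ∧ (x : Ordinal) < (p : Ordinal) := by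
    intro r _ hrp
    have hpm : p ∈ (Subtype.val ⁻¹' (Set.Ioc r (p : Ordinal)) : Set (OrdSpace a)) :=
      ⟨hrp, le_rfl⟩
    obtain ⟨z, hz1, hz2⟩ := mem_closure_iff.mp hp _ (ioc_preimage_open r (p : Ordinal)) hpm
    refine ⟨z, hz2.1, hz1.1, lt_of_le_of_ne hz1.2 ?_⟩
    exact fun h => hz2.2 (Subtype.val_injective h)
  intro hfin
  set S := {x : OrdSpace a | x ∈ A ∧ q < (x : Ordinal) ∧ (x : Ordinal) < (p : Ordinal)}
  set T : Set Ordinal := insert q (Subtype.val '' S)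
  have hTfin : T.Finite := (hfin.image _).insert q
  have hTne : T.Nonempty := ⟨q, Set.mem_insert _ _⟩
  set m := sSup T with hm
  have hmT : m ∈ T := hTne.csSup_mem hTfin
  have hqm : q ≤ m := le_csSup hTfin.bddAbove (Set.mem_insert _ _)
  have hmp : m < (p : Ordinal) := by
    rcases hmT with h | h
    · exact lt_of_le_of_lt h.le hq
    · obtain ⟨x, hx, hxm⟩ := h
      rw [← hxm]; exact hx.2.2
  obtain ⟨z, hzA, hzr, hzp⟩ := step m hqm hmp
  have hzS : z ∈ S := ⟨hzA, lt_of_le_of_lt hqm hzr, hzp⟩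
  have : (z : Ordinal) ≤ m := le_csSup hTfin.bddAbove (Set.mem_insert_of_mem _ ⟨z, hzS, rfl⟩)
  exact absurd hzr (not_lt.mpr this)

/-- Every infinite set of ordinals contains a strictly increasing ω-sequence. -/
lemma exists_strictMono_seq {B : Set Ordinal} (hB : B.Infinite) :
    ∃ x : ℕ → Ordinal, StrictMono x ∧ ∀ n, x n ∈ B := by
  classical
  have hne : {o : Ordinal | (B ∩ Set.Iio o).Infinite}.Nonempty := by
    let f := hB.natEmbedding
    have hbdd : BddAbove (Set.range fun n : ℕ => (f n : Ordinal)) := Ordinal.bddAbove_range _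
    refine ⟨(⨆ n : ℕ, (f n : Ordinal)) + 1, ?_⟩
    have hsub : ∀ n : ℕ, (f n : Ordinal) ∈ B ∩ Set.Iio ((⨆ n : ℕ, (f n : Ordinal)) + 1) := by
      intro n
      refine ⟨(f n).2, ?_⟩
      have h1 : (f n : Ordinal) ≤ ⨆ n : ℕ, (f n : Ordinal) := le_ciSup hbdd n
      have h2 : (⨆ n : ℕ, (f n : Ordinal)) < (⨆ n : ℕ, (f n : Ordinal)) + 1 := by
        rw [Ordinal.add_one_eq_succ]; exact Order.lt_succ _
      exact lt_of_le_of_lt h1 h2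
    exact Set.infinite_of_injective_forall_mem
      (Subtype.val_injective.comp f.injective) hsub
  set s := sInf {o : Ordinal | (B ∩ Set.Iio o).Infinite} with hs_def
  have hs : (B ∩ Set.Iio s).Infinite := csInf_mem hne
  have key : ∀ r, r < s → ∃ y, y ∈ B ∧ r < y ∧ y < s := by
    intro r hr
    have hrfin : (B ∩ Set.Iio r).Finite := by
      by_contra h
      have hmem : r ∈ {o : Ordinal | (B ∩ Set.Iio o).Infinite} := h
      exact absurd (csInf_le (OrderBot.bddBelow _) hmem) (not_le.mpr hr)
    have hr1fin : (B ∩ Set.Iio (r + 1)).Finite := by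
      refine Set.Finite.subset (hrfin.union (Set.finite_singleton r)) ?_
      rintro y ⟨hyB, hy⟩
      have hy' : y ≤ r := Order.lt_succ_iff.mp (Ordinal.add_one_eq_succ r ▸ hy)
      rcases lt_or_eq_of_le hy' with h | h
      · exact Or.inl ⟨hyB, h⟩
      · exact Or.inr h
    obtain ⟨y, hy1, hy2⟩ := (hs.diff hr1fin).nonempty
    refine ⟨y, hy1.1, ?_, hy1.2⟩
    by_contra h
    exact hy2 ⟨hy1.1, lt_of_le_of_lt (not_lt.mp h)
      (by rw [Ordinal.add_one_eq_succ]; exact Order.lt_succ r)⟩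
  choose! F hF using key
  obtain ⟨x0, hx0⟩ := hs.nonempty
  let x : ℕ → Ordinal := fun n => Nat.rec x0 (fun _ prev => F prev) n
  have hx : ∀ n, x n ∈ B ∧ x n < s := by
    intro n
    induction n with
    | zero => exact ⟨hx0.1, hx0.2⟩
    | succ n ih =>
      obtain ⟨h1, h2, h3⟩ := hF (x n) ih.2
      exact ⟨h1, h3⟩
  have hlt : ∀ n, x n < x (n + 1) := fun n => (hF (x n) (hx n).2).2.1
  exact ⟨x, strictMono_nat_of_lt_succ hlt, fun n => (hx n).1⟩
instance (a : Ordinal) : CompactSpace (OrdSpace a) := by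
  rw [← isCompact_iff_compactSpace, ← Set.Icc_bot]
  exact isCompact_Icc

/-- Combinatorial characterization of `conv_a`: `A ∈ conv_a` iff for every strictly
increasing sequence `(λ_n)` in `ω^a`, `A ∩ [λ_n, λ_{n+1}]` is finite for all but
finitely many `n`. -/
theorem stmt3 (a : Ordinal) (ha : 2 ≤ a) (hac : a.card ≤ Cardinal.aleph0)
    (A : Set (OrdSpace a)) :
    A ∈ convIdeal a ↔
      ∀ l : ℕ → Ordinal, StrictMono l → (∀ n, l n < omega0 ^ a) →
        ∀ᶠ n in atTop,
          {x ∈ A | l n ≤ (x : Ordinal) ∧ (x : Ordinal) ≤ l (n + 1)}.Finite := by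
  constructor
  · intro hFin l hl hlb
    by_contra hev
    rw [Filter.not_eventually] at hev
    set P : ℕ → Prop :=
      fun n => ¬ {x ∈ A | l n ≤ (x : Ordinal) ∧ (x : Ordinal) ≤ l (n + 1)}.Finite with hP
    have hN : {n | P n}.Infinite := Nat.frequently_atTop_iff_infinite.mp hev
    have hpn : ∀ n, P n → ∃ p : OrdSpace a, p ∈ derivSet A ∧
        l n ≤ (p : Ordinal) ∧ (p : Ordinal) ≤ l (n + 1) := by
      intro n hn
      obtain ⟨p, hpc, hpd⟩ := exists_mem_derivSet_of_infinite'
        (S := {x ∈ A | l n ≤ (x : Ordinal) ∧ (x : Ordinal) ≤ l (n + 1)}) hn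
      have hcl : closure {x ∈ A | l n ≤ (x : Ordinal) ∧ (x : Ordinal) ≤ l (n + 1)} ⊆
          (Subtype.val ⁻¹' (Set.Icc (l n) (l (n + 1))) : Set (OrdSpace a)) := by
        apply closure_minimal
        · rintro x ⟨_, h1, h2⟩; exact ⟨h1, h2⟩
        · exact isClosed_Icc.preimage continuous_subtype_val
      exact ⟨p, derivSet_mono' (Set.sep_subset _ _) hpd, (hcl hpc).1, (hcl hpc).2⟩
    choose! p hp1 hp2 hp3 using hpn
    have hnth : ∀ k, P (Nat.nth P k) := fun k => Nat.nth_mem_of_infinite hN k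
    have hmono := Nat.nth_strictMono hN
    have hsm : StrictMono (fun k => ((p (Nat.nth P (2 * k)) : OrdSpace a) : Ordinal)) := by
      intro k k' hk
      have h1 : Nat.nth P (2 * k) + 1 ≤ Nat.nth P (2 * k + 1) :=
        Nat.succ_le_of_lt (hmono (Nat.lt_succ_self _))
      have h2 : Nat.nth P (2 * k + 1) < Nat.nth P (2 * k') := hmono (by omega)
      calc ((p (Nat.nth P (2 * k)) : OrdSpace a) : Ordinal)
          ≤ l (Nat.nth P (2 * k) + 1) := hp3 _ (hnth _)
        _ < l (Nat.nth P (2 * k')) := hl (lt_of_le_of_lt h1 h2)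
        _ ≤ ((p (Nat.nth P (2 * k')) : OrdSpace a) : Ordinal) := hp2 _ (hnth _)
    have hinj : Function.Injective (fun k => p (Nat.nth P (2 * k))) :=
      fun k k' h => hsm.injective (congrArg _ h)
    exact hFin.not_infinite
      (Set.infinite_of_injective_forall_mem hinj (fun k => hp1 _ (hnth _)))
  · intro hR
    by_contra hD
    have hD' : (derivSet A).Infinite := hD
    have hB : ((Subtype.val '' derivSet A) \ {omega0 ^ a}).Infinite :=
      (hD'.image (Subtype.val_injective.injOn)).diff (Set.finite_singleton _)
    obtain ⟨x, hxmono, hxmem⟩ := exists_strictMono_seq hB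
    have hbd : ∀ n, x n < omega0 ^ a := by
      intro n
      obtain ⟨h1, h2⟩ := hxmem n
      obtain ⟨y, _, hy⟩ := h1
      exact lt_of_le_of_ne (hy ▸ y.2) (by simpa using h2)
    obtain ⟨n, hn⟩ := (hR x hxmono hbd).exists
    obtain ⟨h1, h2⟩ := hxmem (n + 1)
    obtain ⟨p, hpD, hpv⟩ := h1
    have hq : x n < (p : Ordinal) := by rw [hpv]; exact hxmono (Nat.lt_succ_self n)
    have hinf := left_points hpD hq
    have hsub : {y : OrdSpace a | y ∈ A ∧ x n < (y : Ordinal) ∧ (y : Ordinal) < (p : Ordinal)}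
        ⊆ {y ∈ A | x n ≤ (y : Ordinal) ∧ (y : Ordinal) ≤ x (n + 1)} := by
      rintro y ⟨hyA, hy1, hy2⟩
      refine ⟨hyA, hy1.le, ?_⟩
      rw [← hpv]; exact hy2.le
    exact absurd hn (hinf.mono hsub)
end
end

section
/- The ideal conv_2 on ω^2 + 1 is isomorphic to the ideal Fin ⊗ Fin on ω × ω. -/
open Set Filter Topology Ordinal

noncomputable section

def gfun : ℕ × ℕ → Ordinal
  | (0, 0) => omega0 ^ (2:Ordinal)
  | (0, j+1) => j
  | (i+1, j) => omega0 * ((i:Ordinal)+1) + j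

lemma omega0_sq : omega0 ^ (2:Ordinal) = omega0 * omega0 := by
  rw [show (2:Ordinal) = 1 + 1 by norm_num, opow_add, opow_one]

lemma block_lt (i j : ℕ) : omega0 * (i:Ordinal) + j < omega0 * omega0 := by
  calc omega0 * (i:Ordinal) + j < omega0 * i + omega0 :=
        add_lt_add_right (nat_lt_omega0 j) _
    _ = omega0 * ((i:Ordinal)+1) := by rw [mul_add, mul_one]
    _ ≤ omega0 * omega0 := by
        apply mul_le_mul_right
        exact_mod_cast (nat_lt_omega0 (i+1)).le

lemma gfun_le (p : ℕ × ℕ) : gfun p ≤ omega0 ^ (2:Ordinal) := by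
  rw [omega0_sq]
  match p with
  | (0, 0) => exact omega0_sq.le
  | (0, j+1) =>
      exact ((nat_lt_omega0 j).trans_le (le_mul_right _ omega0_pos)).le
  | (i+1, j) =>
      have := block_lt (i+1) j
      push_cast at this ⊢
      exact this.le

lemma gfun_inj : Function.Injective gfun := by
  have hdiv : ∀ i j : ℕ, (omega0 * (i:Ordinal) + j) / omega0 = i := by
    intro i j
    rw [Ordinal.mul_add_div _ omega0_ne_zero, Ordinal.div_eq_zero_of_lt (nat_lt_omega0 j), add_zero]
  have hmod : ∀ i j : ℕ, (omega0 * (i:Ordinal) + j) % omega0 = j := by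
    intro i j
    rw [Ordinal.mul_add_mod_self, Ordinal.mod_eq_of_lt (nat_lt_omega0 j)]
  have hblk : ∀ i j i' j' : ℕ, omega0 * (i:Ordinal) + j = omega0 * (i':Ordinal) + j' → i = i' ∧ j = j' := by
    intro i j i' j' h
    constructor
    · have h1 : (omega0 * (i:Ordinal) + j) / omega0 = (omega0 * (i':Ordinal) + j') / omega0 := by
        rw [h]
      rw [hdiv, hdiv] at h1; exact_mod_cast h1
    · have h1 : (omega0 * (i:Ordinal) + j) % omega0 = (omega0 * (i':Ordinal) + j') % omega0 := by
        rw [h]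
      rw [hmod, hmod] at h1; exact_mod_cast h1
  have hlt : ∀ i j : ℕ, omega0 * ((i:Ordinal)+1) + j < omega0 ^ (2:Ordinal) := by
    intro i j
    rw [omega0_sq]
    have := block_lt (i+1) j
    push_cast at this
    exact this
  have hnat_lt : ∀ i j k : ℕ, (k:Ordinal) < omega0 * ((i:Ordinal)+1) + j := by
    intro i j k
    calc (k:Ordinal) < omega0 := nat_lt_omega0 k
      _ ≤ omega0 * ((i:Ordinal)+1) := by
          nth_rewrite 1 [← mul_one omega0]
          exact mul_le_mul_right (by exact_mod_cast Nat.succ_le_succ (Nat.zero_le i)) _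
      _ ≤ _ := le_self_add
  have hnat_lt_sq : ∀ k : ℕ, (k:Ordinal) < omega0 ^ (2:Ordinal) := by
    intro k
    rw [omega0_sq]
    exact (nat_lt_omega0 k).trans_le (le_mul_right _ omega0_pos)
  rintro ⟨i, j⟩ ⟨i', j'⟩ h
  match i, j, i', j' with
  | 0, 0, 0, 0 => rfl
  | 0, 0, 0, j'+1 => exact absurd h.symm (hnat_lt_sq j').ne
  | 0, j+1, 0, 0 => exact absurd h (hnat_lt_sq j).ne
  | 0, 0, i'+1, j' => exact absurd h.symm (hlt i' j').ne
  | i+1, j, 0, 0 => exact absurd h (hlt i j).ne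
  | 0, j+1, i'+1, j'' => exact absurd h.symm (hnat_lt i' j'' j).ne'
  | i+1, j, 0, j'+1 => exact absurd h (hnat_lt i j j').ne'
  | 0, j+1, 0, j'+1 => simp only [gfun] at h; exact_mod_cast congrArg (fun k => (0, k+1)) (by exact_mod_cast h : j = j')
  | i+1, j, i'+1, j' =>
      simp only [gfun] at h
      have h2 : omega0 * ((i+1:ℕ):Ordinal) + j = omega0 * ((i'+1:ℕ):Ordinal) + j' := by
        push_cast; exact h
      obtain ⟨h3, h4⟩ := hblk _ _ _ _ h2
      simp [Nat.succ_injective h3, h4]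

lemma gfun_surj : ∀ p ≤ omega0 ^ (2:Ordinal), ∃ q, gfun q = p := by
  intro p hp
  rcases eq_or_lt_of_le hp with rfl | hlt
  · exact ⟨(0,0), rfl⟩
  · rw [omega0_sq] at hlt
    have hd : p / omega0 < omega0 := (Ordinal.div_lt omega0_ne_zero).2 hlt
    have hm : p % omega0 < omega0 := Ordinal.mod_lt _ omega0_ne_zero
    obtain ⟨i, hi⟩ := lt_omega0.1 hd
    obtain ⟨j, hj⟩ := lt_omega0.1 hm
    have hp' : omega0 * (i:Ordinal) + j = p := by
      rw [← hi, ← hj]; exact Ordinal.div_add_mod p omega0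
    match i with
    | 0 => exact ⟨(0, j+1), by simpa [gfun] using hp'⟩
    | i+1 => exact ⟨(i+1, j), by
        rw [← hp']; show omega0 * ((i:Ordinal)+1) + j = _; norm_cast⟩

lemma finite_Ioc_nat (a : Ordinal) (n : ℕ) : (Set.Ioc a (a + n)).Finite := by
  apply ((Set.finite_Iic n).image (fun k : ℕ => a + (k:Ordinal))).subset
  intro x hx
  have h1 : a ≤ x := hx.1.le
  have h2 : x - a ≤ n := Ordinal.sub_le.2 hx.2
  obtain ⟨k, hk⟩ := lt_omega0.1 (h2.trans_lt (nat_lt_omega0 n))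
  refine ⟨k, ?_, ?_⟩
  · exact_mod_cast hk ▸ h2
  · show a + (k:Ordinal) = x
    rw [← hk, Ordinal.add_sub_cancel_of_le h1]

lemma accPt_add_omega0_iff (a : Ordinal) (S : Set Ordinal) :
    AccPt (a + omega0) (𝓟 S) ↔ (S ∩ Set.Ioo a (a + omega0)).Infinite := by
  constructor
  · intro h
    have h' : (a + omega0).IsAcc S := h
    by_contra hfin
    rw [Set.not_infinite] at hfin
    have hne : (S ∩ Set.Ioo a (a + omega0)).Nonempty := by
      obtain ⟨x, hx⟩ := h'.forall_lt a (lt_add_of_pos_right a omega0_pos)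
      exact ⟨x, hx.1, hx.2⟩
    obtain ⟨m, hm, hmax⟩ := hfin.exists_maximalFor id _ hne
    obtain ⟨x, hxS, hx⟩ := h'.forall_lt m hm.2.2
    have hxF : x ∈ S ∩ Set.Ioo a (a + omega0) := ⟨hxS, hm.2.1.trans hx.1, hx.2⟩
    exact absurd (hmax hxF hx.1.le) (not_le.2 hx.1)
  · intro hinf
    show (a + omega0).IsAcc S
    rw [isAcc_iff]
    refine ⟨(lt_of_lt_of_le omega0_pos le_add_self).ne', fun p hp => ?_⟩
    rcases le_or_gt p a with hpa | hap
    · obtain ⟨x, hx⟩ := hinf.nonempty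
      exact ⟨x, hx.1, hpa.trans_lt hx.2.1, hx.2.2⟩
    · have hsub : p - a < omega0 := by
        rw [Ordinal.sub_lt_of_le hap.le]; exact hp
      obtain ⟨n, hn⟩ := lt_omega0.1 hsub
      have hpan : p = a + n := by rw [← hn, Ordinal.add_sub_cancel_of_le hap.le]
      obtain ⟨x, hx⟩ := (hinf.diff (finite_Ioc_nat a n)).nonempty
      refine ⟨x, hx.1.1, ?_, hx.1.2.2⟩
      by_contra hxp
      push_neg at hxp
      exact hx.2 ⟨hx.1.2.1, hpan ▸ hxp⟩

lemma blockfun_strictMono : StrictMono (fun i : ℕ => omega0 * (i:Ordinal) + omega0) := by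
  intro i i' h
  calc omega0 * (i:Ordinal) + omega0 = omega0 * ((i:Ordinal) + 1) := by rw [mul_add, mul_one]
    _ ≤ omega0 * (i':Ordinal) := by
        apply mul_le_mul_right
        exact_mod_cast Nat.succ_le_of_lt h
    _ < omega0 * (i':Ordinal) + omega0 := lt_add_of_pos_right _ omega0_pos

lemma accPt_finite_iff (S : Set Ordinal) (hS : S ⊆ Set.Iic (omega0 * omega0)) :
    {p | AccPt p (𝓟 S)}.Finite ↔
      {i : ℕ | (S ∩ Set.Ioo (omega0 * (i:Ordinal)) (omega0 * (i:Ordinal) + omega0)).Infinite}.Finite := by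
  set D := {p | AccPt p (𝓟 S)} with hD
  set I := {i : ℕ | (S ∩ Set.Ioo (omega0 * (i:Ordinal)) (omega0 * (i:Ordinal) + omega0)).Infinite} with hI
  have claim1 : ∀ i : ℕ, i ∈ I ↔ (omega0 * (i:Ordinal) + omega0) ∈ D := by
    intro i
    rw [hI, hD, mem_setOf_eq, mem_setOf_eq, accPt_add_omega0_iff]
  constructor
  · intro hDfin
    have : I ⊆ (fun i : ℕ => omega0 * (i:Ordinal) + omega0) ⁻¹' D := by
      intro i hi; exact (claim1 i).1 hi
    exact (hDfin.preimage (blockfun_strictMono.injective.injOn)).subset this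
  · intro hIfin
    have hsub : D ⊆ ((fun i : ℕ => omega0 * (i:Ordinal) + omega0) '' I) ∪ {omega0 * omega0} := by
      intro p hp
      have hlim : Order.IsSuccLimit p := Ordinal.IsAcc.isSuccLimit hp
      have hple : p ≤ omega0 * omega0 := by
        have h1 : p ∈ closure (S \ {p}) :=
          mem_closure_iff_clusterPt.2 (accPt_principal_iff_clusterPt.1 hp)
        have h2 : p ∈ closure S := closure_mono diff_subset h1
        have h3 : closure S ⊆ Set.Iic (omega0 * omega0) := by
          rw [← isClosed_Iic.closure_eq]
          exact closure_mono hS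
        exact h3 h2
      rcases eq_or_lt_of_le hple with rfl | hplt
      · exact Or.inr rfl
      left
      -- p is a limit ordinal < ω*ω, so p = ω*(m+1) for some m
      have hmod : p % omega0 = 0 := by
        by_contra hne
        obtain ⟨n, hn⟩ := lt_omega0.1 (Ordinal.mod_lt p omega0_ne_zero)
        have hn0 : n ≠ 0 := by rintro rfl; exact hne (by simpa using hn)
        obtain ⟨k, rfl⟩ := Nat.exists_eq_succ_of_ne_zero hn0
        have : p = Order.succ (omega0 * (p / omega0) + k) := by
          conv_lhs => rw [← Ordinal.div_add_mod p omega0, hn]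
          rw [Nat.succ_eq_add_one]
          push_cast
          rw [← add_assoc, Ordinal.add_one_eq_succ]
        exact Order.not_isSuccLimit_succ _ (this ▸ hlim)
      have hdvd : p = omega0 * (p / omega0) := by
        conv_lhs => rw [← Ordinal.div_add_mod p omega0, hmod, add_zero]
      have hqlt : p / omega0 < omega0 := (Ordinal.div_lt omega0_ne_zero).2 hplt
      obtain ⟨m, hm⟩ := lt_omega0.1 hqlt
      have hm0 : m ≠ 0 := by
        rintro rfl
        rw [hm] at hdvd
        simp at hdvd
        exact hlim.pos.ne' hdvd
      obtain ⟨m', rfl⟩ := Nat.exists_eq_succ_of_ne_zero hm0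
      have hpeq : p = omega0 * (m':Ordinal) + omega0 := by
        rw [hdvd, hm]
        push_cast
        rw [mul_add, mul_one]
      refine ⟨m', (claim1 m').2 ?_, hpeq.symm⟩
      rw [hD, mem_setOf_eq, ← hpeq]
      exact hp
    exact ((hIfin.image _).union (finite_singleton _)).subset hsub
lemma mem_derivSet_iff (A : Set (OrdSpace 2)) (x : OrdSpace 2) :
    x ∈ derivSet A ↔ AccPt (x:Ordinal) (𝓟 (Subtype.val '' A)) := by
  rw [derivSet, mem_setOf_eq, closure_subtype, accPt_principal_iff_clusterPt,
    ← mem_closure_iff_clusterPt, Set.image_diff Subtype.val_injective, Set.image_singleton]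

lemma derivSet_image (A : Set (OrdSpace 2)) :
    Subtype.val '' derivSet A = {p | AccPt p (𝓟 (Subtype.val '' A))} := by
  ext p
  constructor
  · rintro ⟨x, hx, rfl⟩; exact (mem_derivSet_iff A x).1 hx
  · intro hp
    have hple : p ∈ Set.Iic (omega0 ^ (2:Ordinal)) := by
      have h1 : p ∈ closure (Subtype.val '' A) :=
        closure_mono diff_subset
          (mem_closure_iff_clusterPt.2 (accPt_principal_iff_clusterPt.1 hp))
      have h2 : closure (Subtype.val '' A) ⊆ Set.Iic (omega0 ^ (2:Ordinal)) :=
        closure_minimal (by rintro q ⟨x, _, rfl⟩; exact x.2) isClosed_Iic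
      exact h2 h1
    exact ⟨⟨p, hple⟩, (mem_derivSet_iff A _).2 hp, rfl⟩

lemma derivSet_finite_iff (A : Set (OrdSpace 2)) :
    (derivSet A).Finite ↔ {p | AccPt p (𝓟 (Subtype.val '' A))}.Finite := by
  constructor
  · intro h; rw [← derivSet_image]; exact h.image _
  · intro h
    apply Set.Finite.of_finite_image _ Subtype.val_injective.injOn
    rw [derivSet_image]; exact h

/-- shift on second coordinate -/
def sh (i j : ℕ) : ℕ := if i = 0 then j + 1 else j

lemma block_inter_eq (A : Set (ℕ × ℕ)) (i : ℕ) :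
    gfun '' A ∩ Set.Ioo (omega0 * (i:Ordinal)) (omega0 * (i:Ordinal) + omega0)
      = (fun j : ℕ => omega0 * (i:Ordinal) + (j:Ordinal)) '' {j | 0 < j ∧ (i, sh i j) ∈ A} := by
  ext x
  constructor
  · rintro ⟨⟨⟨a, b⟩, hab, rfl⟩, hio⟩
    match a, b with
    | 0, 0 =>
        exfalso
        have h1 : gfun (0,0) = omega0 * omega0 := omega0_sq
        have h2 : omega0 * (i:Ordinal) + omega0 ≤ omega0 * omega0 := by
          rw [show omega0 * (i:Ordinal) + omega0 = omega0 * ((i:Ordinal)+1) by rw [mul_add, mul_one]]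
          exact mul_le_mul_right (by exact_mod_cast (nat_lt_omega0 (i+1)).le) _
        exact absurd (hio.2.trans_le h2) (by rw [h1]; exact lt_irrefl _)
    | 0, b+1 =>
        have hgb : gfun (0, b+1) = (b:Ordinal) := rfl
        rw [hgb] at hio
        have hi0 : i = 0 := by
          by_contra hi
          obtain ⟨m, rfl⟩ := Nat.exists_eq_succ_of_ne_zero hi
          have : omega0 ≤ omega0 * ((m+1:ℕ):Ordinal) := by
            nth_rewrite 1 [← mul_one omega0]
            exact mul_le_mul_right (by exact_mod_cast Nat.succ_le_succ (Nat.zero_le m)) _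
          exact absurd (hio.1.trans (nat_lt_omega0 b)) (not_lt.2 this)
        subst hi0
        have hb0 : 0 < b := by
          have := hio.1
          simpa using this
        refine ⟨b, ⟨hb0, ?_⟩, by simp [hgb]⟩
        simpa [sh] using hab
    | a+1, b =>
        have hg : gfun (a+1, b) = omega0 * ((a:Ordinal)+1) + b := rfl
        rw [hg] at hio
        have hai : (a:ℕ) + 1 = i := by
          have hle1 : a + 1 ≤ i := by
            have hx : omega0 * ((a:Ordinal)+1) + b < omega0 * ((i:Ordinal)+1) := by
              rw [mul_add omega0 (i:Ordinal) 1, mul_one]; exact hio.2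
            have := (Ordinal.div_lt omega0_ne_zero).2 hx
            rw [Ordinal.mul_add_div _ omega0_ne_zero,
              Ordinal.div_eq_zero_of_lt (nat_lt_omega0 b), add_zero] at this
            have h4 : (a:ℕ) + 1 < i + 1 := by exact_mod_cast this
            omega
          have hle2 : i ≤ a + 1 := by
            by_contra hgt
            push_neg at hgt
            have : omega0 * ((a:Ordinal)+1) + b < omega0 * (i:Ordinal) := by
              calc omega0 * ((a:Ordinal)+1) + b < omega0 * ((a:Ordinal)+1) + omega0 :=
                    add_lt_add_right (nat_lt_omega0 b) _
                _ = omega0 * ((a:Ordinal)+1+1) := by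
                    rw [mul_add omega0 ((a:Ordinal)+1) 1, mul_one]
                _ ≤ omega0 * (i:Ordinal) := by
                    apply mul_le_mul_right
                    exact_mod_cast Nat.succ_le_of_lt hgt
            exact absurd (hio.1.trans this) (lt_irrefl _)
          exact le_antisymm hle1 hle2
        have hb0 : 0 < b := by
          have h1 := hio.1
          rw [← hai] at h1
          push_cast at h1
          by_contra hb
          push_neg at hb
          interval_cases b
          simp at h1
        refine ⟨b, ⟨hb0, ?_⟩, ?_⟩
        · have : sh i b = b := by rw [sh, if_neg (by omega : i ≠ 0)]
          rw [this, ← hai]; exact hab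
        · show omega0 * (i:Ordinal) + b = _
          rw [hg, ← hai]; push_cast; ring_nf
  · rintro ⟨j, ⟨hj0, hjA⟩, rfl⟩
    constructor
    · refine ⟨(i, sh i j), hjA, ?_⟩
      match i with
      | 0 => show gfun (0, j+1) = _; show ((j:ℕ):Ordinal) = _; simp
      | m+1 =>
          show gfun (m+1, j) = _
          show omega0 * ((m:Ordinal)+1) + j = _
          push_cast; ring_nf
    · constructor
      · exact lt_add_of_pos_right _ (by exact_mod_cast hj0)
      · exact add_lt_add_right (nat_lt_omega0 j) _

lemma block_infinite_iff (A : Set (ℕ × ℕ)) (i : ℕ) :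
    (gfun '' A ∩ Set.Ioo (omega0 * (i:Ordinal)) (omega0 * (i:Ordinal) + omega0)).Infinite
      ↔ {j | (i, j) ∈ A}.Infinite := by
  rw [block_inter_eq]
  rw [Set.infinite_image_iff]
  swap
  · intro j _ j' _ h
    simp only at h
    have h2 := congrArg (fun x => x - omega0 * (i:Ordinal)) h
    simp only [Ordinal.add_sub_cancel] at h2
    exact_mod_cast h2
  match i with
  | 0 =>
      constructor
      · intro h
        apply Set.Infinite.mono (s := (fun j => j + 1) '' {j | 0 < j ∧ (0, sh 0 j) ∈ A})
        · rintro k ⟨j, ⟨_, hj⟩, rfl⟩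
          simpa [sh] using hj
        · exact h.image (fun a _ b _ => by omega)
      · intro h
        apply Set.Infinite.mono (s := (fun j => j - 1) '' ({j | (0, j) ∈ A} \ {0, 1}))
        · rintro k ⟨j, ⟨hj, hj'⟩, rfl⟩
          simp only [mem_insert_iff, mem_singleton_iff, not_or] at hj'
          simp only [mem_setOf_eq]
          refine ⟨by omega, ?_⟩
          have hsh : sh 0 (j - 1) = j := by simp only [sh, reduceIte]; omega
          rw [hsh]; exact hj
        · apply Set.Infinite.image
          · intro a ha b hb hab
            simp only [mem_diff, mem_insert_iff, mem_singleton_iff, not_or] at ha hb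
            simp only at hab
            omega
          · exact h.diff (Set.toFinite {0, 1})
  | m+1 =>
      have : {j | 0 < j ∧ (m+1, sh (m+1) j) ∈ A} = {j | (m+1, j) ∈ A} \ {0} := by
        ext j
        simp only [mem_setOf_eq, mem_diff, mem_singleton_iff, sh, reduceIte, Nat.succ_ne_zero]
        exact ⟨fun h => ⟨h.2, Nat.pos_iff_ne_zero.mp h.1⟩, fun h => ⟨Nat.pos_of_ne_zero h.2, h.1⟩⟩
      rw [this]
      constructor
      · exact fun h => h.mono diff_subset
      · exact fun h => h.diff (finite_singleton 0)
/-- `conv_2` is isomorphic to the ideal `Fin ⊗ Fin` on `ω × ω`. -/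
theorem stmt6 :
    ∃ f : (ℕ × ℕ) ≃ OrdSpace 2,
      ∀ A : Set (ℕ × ℕ),
        ({i : ℕ | {j : ℕ | (i, j) ∈ A}.Infinite}.Finite
          ↔ (f '' A) ∈ convIdeal 2) := by
  have hbij : Function.Bijective (fun p : ℕ × ℕ => (⟨gfun p, gfun_le p⟩ : OrdSpace 2)) := by
    constructor
    · intro p q h
      exact gfun_inj (congrArg Subtype.val h)
    · rintro ⟨x, hx⟩
      obtain ⟨q, hq⟩ := gfun_surj x hx
      exact ⟨q, Subtype.ext hq⟩
  refine ⟨Equiv.ofBijective _ hbij, fun A => ?_⟩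
  have himg : Subtype.val '' ((Equiv.ofBijective _ hbij) '' A) = gfun '' A := by
    rw [← Set.image_comp]; rfl
  have hsub : gfun '' A ⊆ Set.Iic (omega0 * omega0) := by
    rintro x ⟨p, _, rfl⟩
    rw [← omega0_sq]
    exact gfun_le p
  have hset : {i : ℕ | (gfun '' A ∩
      Set.Ioo (omega0 * (i:Ordinal)) (omega0 * (i:Ordinal) + omega0)).Infinite}
      = {i : ℕ | {j : ℕ | (i, j) ∈ A}.Infinite} := by
    ext i
    exact block_infinite_iff A i
  simp only [convIdeal, mem_setOf_eq]
  rw [derivSet_finite_iff, himg, accPt_finite_iff _ hsub, hset]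
end
end
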